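/- Let η ∈ (0, 1) and B_1, …, B_H > 0, and let r_h : X_h × A → [−B_h, B_h] for h ∈ [H] be reward functions in a finite low-rank MDP of dimension d satisfying the normalization assumptions. Extend each r_h to the extended MDP by setting r̄_h(x, a) := r_h(x, a) for (x, a) ∈ X_h × A and r̄_h(x, a) := 0 whenever x is a terminal state or a = 𝔞. Then the cost of truncation is bounded: sup_{π∈Π̄_η} Ē^π[Σ_{h=1}^H r̄_h(x_h, a_h)] ≥ sup_{π∈Π̄} Ē^π[Σ_{h=1}^H r̄_h(x_h, a_h)] − 2·H·d^{3/2}·η·Σ_{h=1}^H B_h. -/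

import Mathlib

open scoped BigOperators RealInnerProductSpace

universe u v

variable {X : ℕ → Type u} {A : Type v} [∀ k, Fintype (X k)] [Fintype A] [DecidableEq A]

noncomputable def occ (ρ : X 0 → ℝ) (T : ∀ k, X k → A → X (k + 1) → ℝ)
    (π : ∀ k, X k → A → ℝ) : ∀ k, X k → ℝ
  | 0, x => ρ x
  | k + 1, x' => ∑ x : X k, ∑ a : A, occ ρ T π k x * π k x a * T k x a x'

def IsPolicy (π : ∀ k, X k → A → ℝ) : Prop :=
  ∀ (k : ℕ) (x : X k), (∀ a, 0 ≤ π k x a) ∧ (∑ a : A, π k x a = 1)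

def IsInit (ρ : X 0 → ℝ) : Prop :=
  (∀ x, 0 ≤ ρ x) ∧ (∑ x : X 0, ρ x = 1)

/-- Transition kernel of the extended MDP `M̄`: states `X k ⊕ Unit` (with `Sum.inr ()` the
terminal state `t_{k+1}`), actions `A ⊕ Unit` (with `Sum.inr ()` the terminal action `𝔞`).
The terminal action from any state, and any action from a terminal state, lead
deterministically to the next terminal state; all other transitions are as in `T`. -/
noncomputable def Tb (T : ∀ k, X k → A → X (k + 1) → ℝ) :
    ∀ k, (X k ⊕ Unit) → (A ⊕ Unit) → (X (k + 1) ⊕ Unit) → ℝ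
  | k, Sum.inl x, Sum.inl a, Sum.inl x' => T k x a x'
  | _, Sum.inl _, Sum.inl _, Sum.inr _ => 0
  | _, Sum.inl _, Sum.inr _, Sum.inl _ => 0
  | _, Sum.inl _, Sum.inr _, Sum.inr _ => 1
  | _, Sum.inr _, _, Sum.inl _ => 0
  | _, Sum.inr _, _, Sum.inr _ => 1

/-- Initial distribution of the extended MDP (terminal states have zero mass). -/
def ρb (ρ : X 0 → ℝ) : (X 0 ⊕ Unit) → ℝ := Sum.elim ρ fun _ => 0

/-- A Markov policy of the extended MDP; by convention it takes the terminal action at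
terminal states. -/
def IsExtPolicy (π : ∀ k, (X k ⊕ Unit) → (A ⊕ Unit) → ℝ) : Prop :=
  (∀ (k : ℕ) (x : X k ⊕ Unit), (∀ a, 0 ≤ π k x a) ∧ (∑ a, π k x a = 1)) ∧
  (∀ k : ℕ, π k (Sum.inr ()) (Sum.inr ()) = 1)

/-- Occupancy measure `d̄^π` in the extended MDP. -/
noncomputable def occb (ρ : X 0 → ℝ) (T : ∀ k, X k → A → X (k + 1) → ℝ)
    (π : ∀ k, (X k ⊕ Unit) → (A ⊕ Unit) → ℝ) (k : ℕ) (x : X k ⊕ Unit) : ℝ :=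
  occ (X := fun k => X k ⊕ Unit) (A := A ⊕ Unit) (ρb ρ) (Tb T) π k x

/-- Extended feature map `μ̄` in `ℝ^{d+1}`: `μ̄(x) = (μ(x), 0)` for original states and
`μ̄(t) = e_{d+1}` for terminal states. -/
noncomputable def muExt (d : ℕ) (μ : ∀ k, X k → EuclideanSpace ℝ (Fin d)) (k : ℕ) :
    (X k ⊕ Unit) → EuclideanSpace ℝ (Fin (d + 1))
  | Sum.inl x => WithLp.toLp 2 (fun i : Fin (d + 1) => if hi : (i : ℕ) < d then μ k x ⟨i, hi⟩ else 0)
  | Sum.inr _ => WithLp.toLp 2 (fun i : Fin (d + 1) => if (i : ℕ) = d then 1 else 0)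

/-- The `η`-reachable states at (0-indexed) layer `k` relative to a set `P` of extended
policies; by convention every state of layer `0` is reachable. -/
noncomputable def reachSet (d : ℕ) (ρ : X 0 → ℝ) (T : ∀ k, X k → A → X (k + 1) → ℝ)
    (μ : ∀ k, X k → EuclideanSpace ℝ (Fin d)) (η : ℝ)
    (P : Set (∀ k, (X k ⊕ Unit) → (A ⊕ Unit) → ℝ)) : ∀ k : ℕ, Set (X k)
  | 0 => Set.univ
  | k + 1 => {x | η * ‖muExt d μ (k + 1) (Sum.inl x)‖ ≤
      ⨆ π : P, occb ρ T π.1 (k + 1) (Sum.inl x)}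

/-- The truncated policy classes `Π̄_{n,η}`: `trunc … n` is the paper's `Π̄_{n,η}`, where the
truncation at stage `n + 1` replaces the action by the terminal action at every
(0-indexed) layer-`n` state that is not `η`-reachable relative to `Π̄_{n,η}`, leaving the
policy unchanged everywhere else.  `Π̄_η = trunc … H`. -/
noncomputable def trunc (d : ℕ) (ρ : X 0 → ℝ) (T : ∀ k, X k → A → X (k + 1) → ℝ)
    (μ : ∀ k, X k → EuclideanSpace ℝ (Fin d)) (η : ℝ) :
    ℕ → Set (∀ k, (X k ⊕ Unit) → (A ⊕ Unit) → ℝ)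
  | 0 => {π | IsExtPolicy π}
  | n + 1 => {π | ∃ π' ∈ trunc d ρ T μ η n,
      (∀ m, m ≠ n → π m = π' m) ∧
      (∀ x : X n, x ∈ reachSet d ρ T μ η (trunc d ρ T μ η n) n →
        π n (Sum.inl x) = π' n (Sum.inl x)) ∧
      (∀ x : X n, x ∉ reachSet d ρ T μ η (trunc d ρ T μ η n) n →
        ∀ a, π n (Sum.inl x) a = if a = Sum.inr () then 1 else 0) ∧
      π n (Sum.inr ()) = π' n (Sum.inr ())}

/-- A policy of the original MDP viewed as a policy of the extended MDP (it never takes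
the terminal action at original states). -/
def embed (π : ∀ k, X k → A → ℝ) : ∀ k, (X k ⊕ Unit) → (A ⊕ Unit) → ℝ
  | k, Sum.inl x, Sum.inl a => π k x a
  | _, Sum.inl _, Sum.inr _ => 0
  | _, Sum.inr _, Sum.inl _ => 0
  | _, Sum.inr _, Sum.inr _ => 1

/-- The extension `r̄` of reward functions `r` to the extended MDP: `r̄` agrees with `r` on
original state-action pairs and vanishes at terminal states and on the terminal action. -/
def rExt (r : ∀ k, X k → A → ℝ) : ∀ k, (X k ⊕ Unit) → (A ⊕ Unit) → ℝ
  | k, Sum.inl x, Sum.inl a => r k x a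
  | _, Sum.inl _, Sum.inr _ => 0
  | _, Sum.inr _, _ => 0

/-- `Ē^π[Σ_{k<H} r̄_k(x_k, a_k)]`, the expected total extended reward of an extended
policy `π` over layers `0, …, H-1`. -/
noncomputable def valueExt (H : ℕ) (ρ : X 0 → ℝ) (T : ∀ k, X k → A → X (k + 1) → ℝ)
    (r : ∀ k, X k → A → ℝ) (π : ∀ k, (X k ⊕ Unit) → (A ⊕ Unit) → ℝ) : ℝ :=
  ∑ k ∈ Finset.range H, ∑ x : X k ⊕ Unit, ∑ a : A ⊕ Unit,
    occb ρ T π k x * π k x a * rExt r k x a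

/-! ### Auxiliary lemmas -/

section AuxGeneric

theorem occ_succ (ρ : X 0 → ℝ) (T : ∀ k, X k → A → X (k + 1) → ℝ)
    (π : ∀ k, X k → A → ℝ) (k : ℕ) (x' : X (k + 1)) :
    occ ρ T π (k + 1) x' = ∑ x : X k, ∑ a : A, occ ρ T π k x * π k x a * T k x a x' := rfl

theorem occ_congr (ρ : X 0 → ℝ) (T : ∀ k, X k → A → X (k + 1) → ℝ)
    {π π' : ∀ k, X k → A → ℝ} :
    ∀ k, (∀ j, j < k → π j = π' j) → occ ρ T π k = occ ρ T π' k := by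
  intro k
  induction k with
  | zero => intro _; rfl
  | succ k ih =>
    intro h
    funext x'
    rw [occ_succ, occ_succ, ih (fun j hj => h j (hj.trans (Nat.lt_succ_self k))),
      h k (Nat.lt_succ_self k)]

theorem occ_nonneg (ρ : X 0 → ℝ) (T : ∀ k, X k → A → X (k + 1) → ℝ)
    {π : ∀ k, X k → A → ℝ} (hρ : ∀ x, 0 ≤ ρ x) (hπ : ∀ j x a, 0 ≤ π j x a) :
    ∀ k, (∀ j, j < k → ∀ x a x', 0 ≤ T j x a x') → ∀ x, 0 ≤ occ ρ T π k x := by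
  intro k
  induction k with
  | zero => intro _ x; exact hρ x
  | succ k ih =>
    intro h x'
    rw [occ_succ]
    refine Finset.sum_nonneg fun x _ => Finset.sum_nonneg fun a _ => ?_
    have h1 := ih (fun j hj => h j (hj.trans (Nat.lt_succ_self k))) x
    have h2 := hπ k x a
    have h3 := h k (Nat.lt_succ_self k) x a x'
    positivity

theorem occ_sum (ρ : X 0 → ℝ) (T : ∀ k, X k → A → X (k + 1) → ℝ)
    {π : ∀ k, X k → A → ℝ} (hρ : ∑ x, ρ x = 1) (hπ : ∀ j x, ∑ a, π j x a = 1) :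
    ∀ k, (∀ j, j < k → ∀ x a, ∑ x', T j x a x' = 1) → ∑ x, occ ρ T π k x = 1 := by
  intro k
  induction k with
  | zero => intro _; exact hρ
  | succ k ih =>
    intro h
    have : ∑ x' : X (k + 1), occ ρ T π (k + 1) x'
        = ∑ x : X k, ∑ a : A, occ ρ T π k x * π k x a * (∑ x', T k x a x') := by
      simp only [occ_succ]
      rw [Finset.sum_comm]
      refine Finset.sum_congr rfl fun x _ => ?_
      rw [Finset.sum_comm]
      refine Finset.sum_congr rfl fun a _ => ?_
      rw [Finset.mul_sum]
    rw [this]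
    have : ∑ x : X k, ∑ a : A, occ ρ T π k x * π k x a * (∑ x', T k x a x')
        = ∑ x : X k, occ ρ T π k x := by
      refine Finset.sum_congr rfl fun x _ => ?_
      have : ∀ a : A, occ ρ T π k x * π k x a * (∑ x', T k x a x')
          = occ ρ T π k x * π k x a := fun a => by
        rw [h k (Nat.lt_succ_self k) x a, mul_one]
      rw [Finset.sum_congr rfl fun a _ => this a, ← Finset.mul_sum, hπ k x, mul_one]
    rw [this]
    exact ih (fun j hj => h j (hj.trans (Nat.lt_succ_self k)))

theorem Tb_nonneg {T : ∀ k, X k → A → X (k + 1) → ℝ} {k : ℕ}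
    (h : ∀ x a x', 0 ≤ T k x a x') :
    ∀ x a x', 0 ≤ Tb T k x a x' := by
  rintro (x | ⟨⟩) (a | ⟨⟩) (x' | ⟨⟩) <;> simp [Tb] <;> exact h x a x'

theorem Tb_sum {T : ∀ k, X k → A → X (k + 1) → ℝ} {k : ℕ}
    (h : ∀ x a, ∑ x', T k x a x' = 1) :
    ∀ x a, ∑ x' : X (k + 1) ⊕ Unit, Tb T k x a x' = 1 := by
  rintro (x | ⟨⟩) (a | ⟨⟩) <;> simp [Tb, Fintype.sum_sum_type] <;> exact h x a

end AuxGeneric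

section AuxExt

set_option linter.unusedSectionVars false

variable (H : ℕ) (ρ : X 0 → ℝ) (T : ∀ k, X k → A → X (k + 1) → ℝ)

theorem occb_nonneg (hρ : IsInit ρ)
    (hT : ∀ k, k + 2 ≤ H → ∀ (x : X k) (a : A),
      (∀ x', 0 ≤ T k x a x') ∧ (∑ x', T k x a x' = 1))
    {π : ∀ k, (X k ⊕ Unit) → (A ⊕ Unit) → ℝ} (hπ : ∀ j x a, 0 ≤ π j x a)
    {k : ℕ} (hk : k + 1 ≤ H) (x : X k ⊕ Unit) : 0 ≤ occb ρ T π k x := by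
  refine occ_nonneg (ρb ρ) (Tb T) ?_ hπ k ?_ x
  · rintro (x | ⟨⟩) <;> simp [ρb]
    exact hρ.1 x
  · intro j hj
    exact Tb_nonneg fun x a x' => (hT j (by omega) x a).1 x'

theorem occb_sum (hρ : IsInit ρ)
    (hT : ∀ k, k + 2 ≤ H → ∀ (x : X k) (a : A),
      (∀ x', 0 ≤ T k x a x') ∧ (∑ x', T k x a x' = 1))
    {π : ∀ k, (X k ⊕ Unit) → (A ⊕ Unit) → ℝ} (hπ : ∀ j x, ∑ a, π j x a = 1)
    {k : ℕ} (hk : k + 1 ≤ H) : ∑ x, occb ρ T π k x = 1 := by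
  refine occ_sum (ρb ρ) (Tb T) ?_ hπ k ?_
  · simp [ρb, Fintype.sum_sum_type]
    exact hρ.2
  · intro j hj
    exact Tb_sum fun x a => (hT j (by omega) x a).2

theorem occb_le_one (hρ : IsInit ρ)
    (hT : ∀ k, k + 2 ≤ H → ∀ (x : X k) (a : A),
      (∀ x', 0 ≤ T k x a x') ∧ (∑ x', T k x a x' = 1))
    {π : ∀ k, (X k ⊕ Unit) → (A ⊕ Unit) → ℝ} (hπ : IsExtPolicy π)
    {k : ℕ} (hk : k + 1 ≤ H) (x : X k ⊕ Unit) : occb ρ T π k x ≤ 1 := by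
  have h1 : ∀ y, 0 ≤ occb ρ T π k y :=
    occb_nonneg H ρ T hρ hT (fun j x a => (hπ.1 j x).1 a) hk
  have h2 : ∑ y, occb ρ T π k y = 1 := occb_sum H ρ T hρ hT (fun j x => (hπ.1 j x).2) hk
  calc occb ρ T π k x ≤ ∑ y, occb ρ T π k y :=
        Finset.single_le_sum (fun y _ => h1 y) (Finset.mem_univ x)
    _ = 1 := h2

theorem sum_inl_le_one {π : ∀ k, (X k ⊕ Unit) → (A ⊕ Unit) → ℝ} (hπ : IsExtPolicy π)
    (k : ℕ) (x : X k ⊕ Unit) : ∑ a : A, π k x (Sum.inl a) ≤ 1 := by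
  have h := (hπ.1 k x).2
  rw [Fintype.sum_sum_type] at h
  have h2 : (0:ℝ) ≤ ∑ u : Unit, π k x (Sum.inr u) :=
    Finset.sum_nonneg fun u _ => (hπ.1 k x).1 _
  linarith

theorem occb_succ_inl (π : ∀ k, (X k ⊕ Unit) → (A ⊕ Unit) → ℝ) (k : ℕ) (x' : X (k + 1)) :
    occb ρ T π (k + 1) (Sum.inl x') =
      ∑ x : X k, ∑ a : A,
        occb ρ T π k (Sum.inl x) * π k (Sum.inl x) (Sum.inl a) * T k x a x' := by
  show occ (ρb ρ) (Tb T) π (k + 1) (Sum.inl x') = _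
  rw [occ_succ, Fintype.sum_sum_type]
  simp [Tb, Fintype.sum_sum_type]
  rfl

theorem valueExt_eq (r : ∀ k, X k → A → ℝ) (π : ∀ k, (X k ⊕ Unit) → (A ⊕ Unit) → ℝ) :
    valueExt H ρ T r π = ∑ k ∈ Finset.range H, ∑ x : X k, ∑ a : A,
      occb ρ T π k (Sum.inl x) * π k (Sum.inl x) (Sum.inl a) * r k x a := by
  unfold valueExt
  refine Finset.sum_congr rfl fun k _ => ?_
  rw [Fintype.sum_sum_type]
  simp [rExt, Fintype.sum_sum_type]

end AuxExt

section AuxTrunc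

set_option linter.unusedSectionVars false

variable (d : ℕ) (ρ : X 0 → ℝ) (T : ∀ k, X k → A → X (k + 1) → ℝ)
  (μ : ∀ k, X k → EuclideanSpace ℝ (Fin d)) (η : ℝ)

theorem trunc_isExtPolicy {n : ℕ} {π : ∀ k, (X k ⊕ Unit) → (A ⊕ Unit) → ℝ}
    (h : π ∈ trunc d ρ T μ η n) : IsExtPolicy π := by
  induction n generalizing π with
  | zero => exact h
  | succ n ih =>
    obtain ⟨π', hπ', hne, hmem, hnmem, hrr⟩ := h
    have hp' := ih hπ'
    constructor
    · intro k x
      by_cases hk : k = n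
      · subst hk
        cases x with
        | inr u =>
          cases u
          rw [hrr]
          exact hp'.1 k (Sum.inr ())
        | inl x0 =>
          by_cases hx : x0 ∈ reachSet d ρ T μ η (trunc d ρ T μ η k) k
          · rw [hmem x0 hx]
            exact hp'.1 k (Sum.inl x0)
          · constructor
            · intro a
              rw [hnmem x0 hx a]
              split <;> norm_num
            · simp [hnmem x0 hx]
      · rw [hne k hk]
        exact hp'.1 k x
    · intro k
      by_cases hk : k = n
      · subst hk
        rw [hrr]
        exact hp'.2 k
      · rw [hne k hk]
        exact hp'.2 k

open Classical in
/-- The truncation of a policy at (0-indexed) layer `n` relative to a set `R` of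
reachable states. -/
noncomputable def truncAt (n : ℕ) (R : Set (X n))
    (π : ∀ k, (X k ⊕ Unit) → (A ⊕ Unit) → ℝ) :
    ∀ k, (X k ⊕ Unit) → (A ⊕ Unit) → ℝ :=
  Function.update π n (fun x a =>
    match x with
    | Sum.inl x0 => if x0 ∈ R then π n x a else if a = Sum.inr () then 1 else 0
    | Sum.inr _ => π n x a)

theorem truncAt_ne {n : ℕ} {R : Set (X n)} {π : ∀ k, (X k ⊕ Unit) → (A ⊕ Unit) → ℝ} {k : ℕ} (h : k ≠ n) :
    truncAt n R π k = π k := Function.update_of_ne h _ _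

theorem truncAt_inr {n : ℕ} {R : Set (X n)} {π : ∀ k, (X k ⊕ Unit) → (A ⊕ Unit) → ℝ} :
    truncAt n R π n (Sum.inr ()) = π n (Sum.inr ()) := by
  unfold truncAt
  rw [Function.update_self]

theorem truncAt_mem {n : ℕ} {R : Set (X n)} {π : ∀ k, (X k ⊕ Unit) → (A ⊕ Unit) → ℝ} {x : X n} (hx : x ∈ R) :
    truncAt n R π n (Sum.inl x) = π n (Sum.inl x) := by
  unfold truncAt
  rw [Function.update_self]
  funext a
  simp [hx]

theorem truncAt_notMem {n : ℕ} {R : Set (X n)} {π : ∀ k, (X k ⊕ Unit) → (A ⊕ Unit) → ℝ} {x : X n} (hx : x ∉ R) (a : A ⊕ Unit) :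
    truncAt n R π n (Sum.inl x) a = if a = Sum.inr () then 1 else 0 := by
  unfold truncAt
  rw [Function.update_self]
  simp [hx]

theorem truncAt_mem_trunc {n : ℕ} {π} (h : π ∈ trunc d ρ T μ η n) :
    truncAt n (reachSet d ρ T μ η (trunc d ρ T μ η n) n) π ∈ trunc d ρ T μ η (n + 1) :=
  ⟨π, h, fun _ hm => truncAt_ne hm, fun _ hx => truncAt_mem hx,
    fun _ hx a => truncAt_notMem hx a, truncAt_inr⟩

end AuxTrunc

section AuxNorm

theorem euclid_coord_le_norm {d : ℕ} (v : EuclideanSpace ℝ (Fin d)) (i : Fin d) :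
    |v i| ≤ ‖v‖ := by
  rw [EuclideanSpace.norm_eq]
  have h1 : |v i| = Real.sqrt (|v i| ^ 2) := by
    rw [Real.sqrt_sq (abs_nonneg _)]
  rw [h1]
  apply Real.sqrt_le_sqrt
  rw [sq_abs]
  have : v i ^ 2 = ‖v i‖ ^ 2 := by rw [Real.norm_eq_abs, sq_abs]
  rw [this]
  exact Finset.single_le_sum (f := fun j => ‖v j‖ ^ 2) (fun j _ => by positivity)
    (Finset.mem_univ i)

theorem euclid_norm_le_sum_abs {d : ℕ} (v : EuclideanSpace ℝ (Fin d)) :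
    ‖v‖ ≤ ∑ i, |v i| := by
  rw [EuclideanSpace.norm_eq]
  have h1 : ∑ i, ‖v i‖ ^ 2 ≤ (∑ i, ‖v i‖) ^ 2 :=
    Finset.sum_sq_le_sq_sum_of_nonneg fun i _ => norm_nonneg _
  calc Real.sqrt (∑ i, ‖v i‖ ^ 2) ≤ Real.sqrt ((∑ i, ‖v i‖) ^ 2) := Real.sqrt_le_sqrt h1
    _ = ∑ i, ‖v i‖ := Real.sqrt_sq (Finset.sum_nonneg fun i _ => norm_nonneg _)
    _ = ∑ i, |v i| := by simp [Real.norm_eq_abs]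

theorem norm_muExt_inl {d : ℕ} (μ : ∀ k, X k → EuclideanSpace ℝ (Fin d)) (k : ℕ) (x : X k) :
    ‖muExt d μ k (Sum.inl x)‖ = ‖μ k x‖ := by
  rw [EuclideanSpace.norm_eq, EuclideanSpace.norm_eq]
  congr 1
  rw [Fin.sum_univ_castSucc]
  have hlast : (muExt d μ k (Sum.inl x)) (Fin.last d) = 0 := by
    simp [muExt]
  rw [hlast]
  simp only [norm_zero]
  have : ∀ i : Fin d, (muExt d μ k (Sum.inl x)) i.castSucc = μ k x i := by
    intro i
    have hi : ((i.castSucc : Fin (d + 1)) : ℕ) < d := i.2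
    simp only [muExt, PiLp.toLp_apply, hi, dif_pos]
    rfl
  simp only [this]
  ring

theorem sum_norm_le {d : ℕ} {Y : Type*} [Fintype Y] (m : Y → EuclideanSpace ℝ (Fin d))
    (hm : ∀ g : Y → ℝ, (∀ x, g x ∈ Set.Icc (0 : ℝ) 1) →
      ‖∑ x, g x • m x‖ ≤ Real.sqrt d) :
    ∑ x, ‖m x‖ ≤ 2 * d * Real.sqrt d := by
  have hcoord : ∀ (g : Y → ℝ) (i : Fin d), (∑ x, g x • m x) i = ∑ x, g x * m x i := by
    intro g i
    have h0 : (∑ x, g x • m x) i = EuclideanSpace.proj (𝕜 := ℝ) i (∑ x, g x • m x) := rfl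
    rw [h0, map_sum]
    refine Finset.sum_congr rfl fun x _ => ?_
    show (g x • m x) i = _
    rw [PiLp.smul_apply, smul_eq_mul]
  have key : ∀ i : Fin d, ∑ x, |m x i| ≤ 2 * Real.sqrt d := by
    intro i
    set gp : Y → ℝ := fun x => if 0 ≤ m x i then 1 else 0 with hgp
    set gm : Y → ℝ := fun x => if 0 ≤ m x i then 0 else 1 with hgm
    have hgp1 : ∀ x, gp x ∈ Set.Icc (0 : ℝ) 1 := by
      intro x; rw [hgp]; dsimp only; split <;> norm_num
    have hgm1 : ∀ x, gm x ∈ Set.Icc (0 : ℝ) 1 := by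
      intro x; rw [hgm]; dsimp only; split <;> norm_num
    have h1 : ‖∑ x, gp x • m x‖ ≤ Real.sqrt d := hm gp hgp1
    have h2 : ‖∑ x, gm x • m x‖ ≤ Real.sqrt d := hm gm hgm1
    have e1 : ∑ x, |m x i| = (∑ x, gp x • m x) i - (∑ x, gm x • m x) i := by
      rw [hcoord, hcoord, ← Finset.sum_sub_distrib]
      refine Finset.sum_congr rfl fun x _ => ?_
      rw [hgp, hgm]
      dsimp only
      rcases le_or_gt 0 (m x i) with h | h
      · rw [if_pos h, if_pos h, abs_of_nonneg h]; ring
      · rw [if_neg (not_le.2 h), if_neg (not_le.2 h), abs_of_neg h]; ring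
    have b1 : (∑ x, gp x • m x) i ≤ Real.sqrt d :=
      le_trans (le_trans (le_abs_self _) (euclid_coord_le_norm _ i)) h1
    have b2 : -(∑ x, gm x • m x) i ≤ Real.sqrt d :=
      le_trans (le_trans (neg_le_abs _) (euclid_coord_le_norm _ i)) h2
    rw [e1]; linarith
  calc ∑ x, ‖m x‖ ≤ ∑ x, ∑ i, |m x i| :=
        Finset.sum_le_sum fun x _ => euclid_norm_le_sum_abs (m x)
    _ = ∑ i, ∑ x, |m x i| := Finset.sum_comm
    _ ≤ ∑ _i : Fin d, 2 * Real.sqrt d := Finset.sum_le_sum fun i _ => key i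
    _ = 2 * d * Real.sqrt d := by
        rw [Finset.sum_const, Finset.card_univ, Fintype.card_fin, nsmul_eq_mul]; ring

end AuxNorm

section AuxKey

set_option linter.unusedSectionVars false

variable (H : ℕ) (ρ : X 0 → ℝ) (T : ∀ k, X k → A → X (k + 1) → ℝ)

theorem truncAt_isExtPolicy {n : ℕ} {R : Set (X n)}
    {π : ∀ k, (X k ⊕ Unit) → (A ⊕ Unit) → ℝ} (hπ : IsExtPolicy π) :
    IsExtPolicy (truncAt n R π) := by
  constructor
  · intro k x
    by_cases hk : k = n
    · subst hk
      cases x with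
      | inr u =>
        cases u
        rw [truncAt_inr]
        exact hπ.1 k (Sum.inr ())
      | inl x0 =>
        by_cases hx : x0 ∈ R
        · rw [truncAt_mem hx]
          exact hπ.1 k (Sum.inl x0)
        · constructor
          · intro a
            rw [truncAt_notMem hx a]
            split <;> norm_num
          · simp [truncAt_notMem hx]
    · rw [truncAt_ne hk]
      exact hπ.1 k x
  · intro k
    by_cases hk : k = n
    · subst hk
      rw [truncAt_inr]
      exact hπ.2 k
    · rw [truncAt_ne hk]
      exact hπ.2 k

open Classical in
/-- The occupancy mass removed by truncating at layer `n` outside `R`. -/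
noncomputable def tmass (π : ∀ k, (X k ⊕ Unit) → (A ⊕ Unit) → ℝ)
    (n : ℕ) (R : Set (X n)) : ℝ :=
  ∑ x : X n, if x ∈ R then 0 else occb ρ T π n (Sum.inl x)

/-- The bracket difference of weighted occupancies of two extended policies. -/
noncomputable def brak (π π' : ∀ k, (X k ⊕ Unit) → (A ⊕ Unit) → ℝ)
    (k : ℕ) (x : X k) (a : A) : ℝ :=
  occb ρ T π k (Sum.inl x) * π k (Sum.inl x) (Sum.inl a) -
    occb ρ T π' k (Sum.inl x) * π' k (Sum.inl x) (Sum.inl a)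

theorem tmass_nonneg (hρ : IsInit ρ)
    (hT : ∀ k, k + 2 ≤ H → ∀ (x : X k) (a : A),
      (∀ x', 0 ≤ T k x a x') ∧ (∑ x', T k x a x' = 1))
    {π : ∀ k, (X k ⊕ Unit) → (A ⊕ Unit) → ℝ} (hπ : IsExtPolicy π)
    {n : ℕ} (hn : n < H) (R : Set (X n)) : 0 ≤ tmass ρ T π n R := by
  refine Finset.sum_nonneg fun x _ => ?_
  split
  · exact le_refl 0
  · exact occb_nonneg H ρ T hρ hT (fun j x a => (hπ.1 j x).1 a) (by omega) _

theorem occb_truncAt_le (n : ℕ) (R : Set (X n))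
    {π : ∀ k, (X k ⊕ Unit) → (A ⊕ Unit) → ℝ}
    {k : ℕ} (hk : k ≤ n) :
    occb ρ T (truncAt n R π) k = occb ρ T π k := by
  unfold occb
  exact occ_congr (ρb ρ) (Tb T) k fun j hj =>
    truncAt_ne (n := n) (R := R) (π := π) (k := j) (by omega)

/-- The value lost by truncating a policy at layer `n` is at most the truncated
occupancy mass times the total reward bound. -/
theorem value_diff_le (hρ : IsInit ρ)
    (hT : ∀ k, k + 2 ≤ H → ∀ (x : X k) (a : A),
      (∀ x', 0 ≤ T k x a x') ∧ (∑ x', T k x a x' = 1))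
    (B : ℕ → ℝ) (hB : ∀ k, k < H → 0 < B k)
    (r : ∀ k, X k → A → ℝ) (hr : ∀ k, k < H → ∀ (x : X k) (a : A), |r k x a| ≤ B k)
    {π : ∀ k, (X k ⊕ Unit) → (A ⊕ Unit) → ℝ} (hπ : IsExtPolicy π)
    (n : ℕ) (hn : n < H) (R : Set (X n)) :
    valueExt H ρ T r π - valueExt H ρ T r (truncAt n R π) ≤
      tmass ρ T π n R * ∑ k ∈ Finset.range H, B k := by
  have hπ0 : ∀ j x a, 0 ≤ π j x a := fun j x a => (hπ.1 j x).1 a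
  have hocc0 : ∀ {k : ℕ}, k + 1 ≤ H → ∀ x, 0 ≤ occb ρ T π k x :=
    fun hk x => occb_nonneg H ρ T hρ hT hπ0 hk x
  have hδ0 : 0 ≤ tmass ρ T π n R := tmass_nonneg H ρ T hρ hT hπ hn R
  have key : ∀ j, n + j + 1 ≤ H →
      (∀ x a, 0 ≤ brak ρ T π (truncAt n R π) (n + j) x a) ∧
      (∑ x, ∑ a, brak ρ T π (truncAt n R π) (n + j) x a ≤ tmass ρ T π n R) := by
    intro j
    induction j with
    | zero =>
      intro hj
      have hocceq : occb ρ T (truncAt n R π) n = occb ρ T π n :=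
        occb_truncAt_le ρ T n R le_rfl
      have hFval : ∀ (x : X n) (a : A), brak ρ T π (truncAt n R π) n x a =
          occb ρ T π n (Sum.inl x) *
            (π n (Sum.inl x) (Sum.inl a) - truncAt n R π n (Sum.inl x) (Sum.inl a)) := by
        intro x a
        unfold brak
        rw [hocceq]
        ring
      constructor
      · intro x a
        show 0 ≤ brak ρ T π (truncAt n R π) n x a
        rw [hFval]
        by_cases hx : x ∈ R
        · rw [truncAt_mem hx]
          simp
        · rw [truncAt_notMem hx]
          simp only [reduceCtorEq, if_false, sub_zero]
          have h1 := hocc0 (by omega) (Sum.inl x)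
          have h2 := hπ0 n (Sum.inl x) (Sum.inl a)
          exact mul_nonneg h1 h2
      · show ∑ x : X n, ∑ a : A, brak ρ T π (truncAt n R π) n x a ≤ tmass ρ T π n R
        unfold tmass
        refine Finset.sum_le_sum fun x _ => ?_
        by_cases hx : x ∈ R
        · rw [if_pos hx]
          refine le_of_eq (Finset.sum_eq_zero fun a _ => ?_)
          rw [hFval, truncAt_mem hx]
          ring
        · rw [if_neg hx]
          have hthis : ∀ a : A, brak ρ T π (truncAt n R π) n x a =
              occb ρ T π n (Sum.inl x) * π n (Sum.inl x) (Sum.inl a) := by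
            intro a
            rw [hFval, truncAt_notMem hx]
            simp
          rw [Finset.sum_congr rfl fun a _ => hthis a, ← Finset.mul_sum]
          exact mul_le_of_le_one_right (hocc0 (by omega) _) (sum_inl_le_one hπ n _)
    | succ j ih =>
      intro hj
      obtain ⟨ihpos, ihsum⟩ := ih (by omega)
      have hkH : n + j + 2 ≤ H := by omega
      have hD : ∀ x', occb ρ T π (n + j + 1) (Sum.inl x') -
          occb ρ T (truncAt n R π) (n + j + 1) (Sum.inl x')
          = ∑ x, ∑ a, brak ρ T π (truncAt n R π) (n + j) x a * T (n + j) x a x' := by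
        intro x'
        rw [occb_succ_inl, occb_succ_inl, ← Finset.sum_sub_distrib]
        refine Finset.sum_congr rfl fun x _ => ?_
        rw [← Finset.sum_sub_distrib]
        refine Finset.sum_congr rfl fun a _ => ?_
        unfold brak
        ring
      have hDpos : ∀ x', 0 ≤ occb ρ T π (n + j + 1) (Sum.inl x') -
          occb ρ T (truncAt n R π) (n + j + 1) (Sum.inl x') := by
        intro x'
        rw [hD]
        refine Finset.sum_nonneg fun x _ => Finset.sum_nonneg fun a _ => ?_
        exact mul_nonneg (ihpos x a) ((hT (n + j) hkH x a).1 x')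
      have hπteq : truncAt n R π (n + j + 1) = π (n + j + 1) := truncAt_ne (by omega)
      have hFsucc : ∀ x' a', brak ρ T π (truncAt n R π) (n + j + 1) x' a' =
          (occb ρ T π (n + j + 1) (Sum.inl x') -
            occb ρ T (truncAt n R π) (n + j + 1) (Sum.inl x')) *
            π (n + j + 1) (Sum.inl x') (Sum.inl a') := by
        intro x' a'
        unfold brak
        rw [hπteq]
        ring
      have hstep : (∀ x' a', 0 ≤ brak ρ T π (truncAt n R π) (n + j + 1) x' a') ∧
          (∑ x', ∑ a', brak ρ T π (truncAt n R π) (n + j + 1) x' a' ≤ tmass ρ T π n R) := by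
        constructor
        · intro x' a'
          rw [hFsucc]
          exact mul_nonneg (hDpos x') (hπ0 _ _ _)
        · have hsum1 : ∑ x', ∑ a', brak ρ T π (truncAt n R π) (n + j + 1) x' a' ≤
              ∑ x', (occb ρ T π (n + j + 1) (Sum.inl x') -
                occb ρ T (truncAt n R π) (n + j + 1) (Sum.inl x')) := by
            refine Finset.sum_le_sum fun x' _ => ?_
            rw [Finset.sum_congr rfl fun a' _ => hFsucc x' a', ← Finset.mul_sum]
            exact mul_le_of_le_one_right (hDpos x') (sum_inl_le_one hπ (n + j + 1) _)
          have hsum2 : ∑ x', (occb ρ T π (n + j + 1) (Sum.inl x') -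
              occb ρ T (truncAt n R π) (n + j + 1) (Sum.inl x')) =
              ∑ x, ∑ a, brak ρ T π (truncAt n R π) (n + j) x a := by
            rw [Finset.sum_congr rfl fun x' _ => hD x']
            rw [Finset.sum_comm]
            refine Finset.sum_congr rfl fun x _ => ?_
            rw [Finset.sum_comm]
            refine Finset.sum_congr rfl fun a _ => ?_
            rw [← Finset.mul_sum, (hT (n + j) hkH x a).2, mul_one]
          calc ∑ x', ∑ a', brak ρ T π (truncAt n R π) (n + j + 1) x' a' ≤ _ := hsum1
            _ = ∑ x, ∑ a, brak ρ T π (truncAt n R π) (n + j) x a := hsum2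
            _ ≤ tmass ρ T π n R := ihsum
      exact hstep
  -- conclude
  rw [valueExt_eq, valueExt_eq, ← Finset.sum_sub_distrib]
  have hlayer : ∀ kk ∈ Finset.range H,
      (∑ x : X kk, ∑ a : A,
          occb ρ T π kk (Sum.inl x) * π kk (Sum.inl x) (Sum.inl a) * r kk x a)
        - (∑ x : X kk, ∑ a : A,
            occb ρ T (truncAt n R π) kk (Sum.inl x) *
              truncAt n R π kk (Sum.inl x) (Sum.inl a) * r kk x a)
        ≤ tmass ρ T π n R * B kk := by
    intro kk hkk
    rw [Finset.mem_range] at hkk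
    rcases lt_or_ge kk n with hlt | hge
    · have h1 : occb ρ T (truncAt n R π) kk = occb ρ T π kk :=
        occb_truncAt_le ρ T n R hlt.le
      have h2 : truncAt n R π kk = π kk := truncAt_ne (by omega)
      rw [h1, h2, sub_self]
      exact mul_nonneg hδ0 (hB kk hkk).le
    · obtain ⟨j, rfl⟩ : ∃ j, kk = n + j := ⟨kk - n, by omega⟩
      obtain ⟨hpos, hsum⟩ := key j (by omega)
      rw [← Finset.sum_sub_distrib]
      have hthis : ∀ x : X (n + j), (∑ a : A,
            occb ρ T π (n + j) (Sum.inl x) * π (n + j) (Sum.inl x) (Sum.inl a) * r (n + j) x a)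
          - (∑ a : A, occb ρ T (truncAt n R π) (n + j) (Sum.inl x) *
              truncAt n R π (n + j) (Sum.inl x) (Sum.inl a) * r (n + j) x a)
          = ∑ a : A, brak ρ T π (truncAt n R π) (n + j) x a * r (n + j) x a := by
        intro x
        rw [← Finset.sum_sub_distrib]
        refine Finset.sum_congr rfl fun a _ => ?_
        unfold brak
        ring
      rw [Finset.sum_congr rfl fun x _ => hthis x]
      calc ∑ x, ∑ a, brak ρ T π (truncAt n R π) (n + j) x a * r (n + j) x a
          ≤ ∑ x, ∑ a, brak ρ T π (truncAt n R π) (n + j) x a * B (n + j) := by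
            refine Finset.sum_le_sum fun x _ => Finset.sum_le_sum fun a _ => ?_
            refine mul_le_mul_of_nonneg_left ?_ (hpos x a)
            exact le_trans (le_abs_self _) (hr (n + j) hkk x a)
        _ = (∑ x, ∑ a, brak ρ T π (truncAt n R π) (n + j) x a) * B (n + j) := by
            rw [Finset.sum_mul]
            exact Finset.sum_congr rfl fun x _ => by rw [Finset.sum_mul]
        _ ≤ tmass ρ T π n R * B (n + j) :=
            mul_le_mul_of_nonneg_right hsum (hB _ hkk).le
  calc ∑ kk ∈ Finset.range H, _ ≤ ∑ kk ∈ Finset.range H, tmass ρ T π n R * B kk :=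
        Finset.sum_le_sum hlayer
    _ = tmass ρ T π n R * ∑ kk ∈ Finset.range H, B kk := by rw [Finset.mul_sum]

end AuxKey

section AuxFinal

set_option linter.unusedSectionVars false

variable (H : ℕ) (ρ : X 0 → ℝ) (T : ∀ k, X k → A → X (k + 1) → ℝ)

theorem valueExt_le (hρ : IsInit ρ)
    (hT : ∀ k, k + 2 ≤ H → ∀ (x : X k) (a : A),
      (∀ x', 0 ≤ T k x a x') ∧ (∑ x', T k x a x' = 1))
    (B : ℕ → ℝ) (hB : ∀ k, k < H → 0 < B k)
    (r : ∀ k, X k → A → ℝ) (hr : ∀ k, k < H → ∀ (x : X k) (a : A), |r k x a| ≤ B k)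
    {π : ∀ k, (X k ⊕ Unit) → (A ⊕ Unit) → ℝ} (hπ : IsExtPolicy π) :
    valueExt H ρ T r π ≤ ∑ k ∈ Finset.range H, B k := by
  rw [valueExt_eq]
  refine Finset.sum_le_sum fun k hk => ?_
  rw [Finset.mem_range] at hk
  have hπ0 : ∀ j x a, 0 ≤ π j x a := fun j x a => (hπ.1 j x).1 a
  have hocc0 : ∀ x, 0 ≤ occb ρ T π k x :=
    fun x => occb_nonneg H ρ T hρ hT hπ0 (by omega) x
  have hsuminl : ∑ x : X k, occb ρ T π k (Sum.inl x) ≤ 1 := by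
    have h := occb_sum H ρ T hρ hT (fun j x => (hπ.1 j x).2) (k := k) (by omega)
    rw [Fintype.sum_sum_type] at h
    have h2 : (0:ℝ) ≤ ∑ u : Unit, occb ρ T π k (Sum.inr u) :=
      Finset.sum_nonneg fun u _ => hocc0 _
    linarith
  calc ∑ x : X k, ∑ a : A,
        occb ρ T π k (Sum.inl x) * π k (Sum.inl x) (Sum.inl a) * r k x a
      ≤ ∑ x : X k, ∑ a : A,
          occb ρ T π k (Sum.inl x) * π k (Sum.inl x) (Sum.inl a) * B k := by
        refine Finset.sum_le_sum fun x _ => Finset.sum_le_sum fun a _ => ?_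
        refine mul_le_mul_of_nonneg_left ?_ (mul_nonneg (hocc0 _) (hπ0 _ _ _))
        exact le_trans (le_abs_self _) (hr k hk x a)
    _ = ∑ x : X k,
          (occb ρ T π k (Sum.inl x) * ∑ a : A, π k (Sum.inl x) (Sum.inl a)) * B k := by
        refine Finset.sum_congr rfl fun x _ => ?_
        rw [Finset.mul_sum, Finset.sum_mul]
    _ ≤ ∑ x : X k, occb ρ T π k (Sum.inl x) * B k := by
        refine Finset.sum_le_sum fun x _ => ?_
        refine mul_le_mul_of_nonneg_right ?_ (hB k hk).le
        exact mul_le_of_le_one_right (hocc0 _) (sum_inl_le_one hπ k _)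
    _ = (∑ x : X k, occb ρ T π k (Sum.inl x)) * B k := (Finset.sum_mul _ _ _).symm
    _ ≤ 1 * B k := mul_le_mul_of_nonneg_right hsuminl (hB k hk).le
    _ = B k := one_mul _

theorem tmass_reach_le (hρ : IsInit ρ)
    (hT : ∀ k, k + 2 ≤ H → ∀ (x : X k) (a : A),
      (∀ x', 0 ≤ T k x a x') ∧ (∑ x', T k x a x' = 1))
    (d : ℕ) (μ : ∀ k, X k → EuclideanSpace ℝ (Fin d)) (η : ℝ) (hη : 0 < η)
    (hμn : ∀ k, k + 2 ≤ H → ∀ g : X (k + 1) → ℝ, (∀ x', g x' ∈ Set.Icc (0 : ℝ) 1) →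
      ‖∑ x' : X (k + 1), g x' • μ (k + 1) x'‖ ≤ Real.sqrt d)
    {n : ℕ} (hn1 : 1 ≤ n) (hn : n < H)
    {π : ∀ k, (X k ⊕ Unit) → (A ⊕ Unit) → ℝ} (hπ : π ∈ trunc d ρ T μ η n) :
    tmass ρ T π n (reachSet d ρ T μ η (trunc d ρ T μ η n) n) ≤
      η * (2 * d * Real.sqrt d) := by
  obtain ⟨m, rfl⟩ : ∃ m, n = m + 1 := ⟨n - 1, by omega⟩
  have hsum : ∑ x : X (m + 1), ‖μ (m + 1) x‖ ≤ 2 * d * Real.sqrt d :=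
    sum_norm_le (μ (m + 1)) (hμn m (by omega))
  calc tmass ρ T π (m + 1) (reachSet d ρ T μ η (trunc d ρ T μ η (m + 1)) (m + 1))
      ≤ ∑ x : X (m + 1), η * ‖μ (m + 1) x‖ := by
        unfold tmass
        refine Finset.sum_le_sum fun x _ => ?_
        by_cases hx : x ∈ reachSet d ρ T μ η (trunc d ρ T μ η (m + 1)) (m + 1)
        · rw [if_pos hx]
          positivity
        · rw [if_neg hx]
          have hbdd : BddAbove (Set.range fun π' : (trunc d ρ T μ η (m + 1)) =>
              occb ρ T π'.1 (m + 1) (Sum.inl x)) := by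
            refine ⟨1, ?_⟩
            rintro _ ⟨π', rfl⟩
            exact occb_le_one H ρ T hρ hT
              (trunc_isExtPolicy d ρ T μ η π'.2) (by omega) _
          have hxlt : ¬ (η * ‖muExt d μ (m + 1) (Sum.inl x)‖ ≤
              ⨆ π' : (trunc d ρ T μ η (m + 1)), occb ρ T π'.1 (m + 1) (Sum.inl x)) := by
            intro hcon
            exact hx hcon
          rw [not_le] at hxlt
          rw [norm_muExt_inl] at hxlt
          exact le_of_lt (lt_of_le_of_lt
            (le_ciSup hbdd (⟨π, hπ⟩ : (trunc d ρ T μ η (m + 1)))) hxlt)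
    _ = η * ∑ x : X (m + 1), ‖μ (m + 1) x‖ := (Finset.mul_sum _ _ _).symm
    _ ≤ η * (2 * d * Real.sqrt d) := mul_le_mul_of_nonneg_left hsum hη.le

end AuxFinal

/-- (Cost of truncation; the paper's Lemma B.4.)  In a finite low-rank
MDP of dimension `d` satisfying the normalization assumptions, for reward functions
`r_k : X k × A → [-B_k, B_k]` extended by `0` to the extended MDP, the best total reward
achievable by truncated policies `Π̄_η` is within `2 H d^{3/2} η Σ_k B_k` of the best total
reward achievable by arbitrary extended policies. -/
theorem stmt_14 (H d : ℕ) (hd : 1 ≤ d) (hH : 2 ≤ H)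
    (ρ : X 0 → ℝ) (hρ : IsInit ρ)
    (T : ∀ k, X k → A → X (k + 1) → ℝ)
    (hT : ∀ k, k + 2 ≤ H → ∀ (x : X k) (a : A),
      (∀ x', 0 ≤ T k x a x') ∧ (∑ x', T k x a x' = 1))
    (φ : ∀ k, X k → A → EuclideanSpace ℝ (Fin d))
    (μ : ∀ k, X k → EuclideanSpace ℝ (Fin d))
    (hlow : ∀ k, k + 2 ≤ H → ∀ (x : X k) (a : A) (x' : X (k + 1)),
      T k x a x' = ⟪μ (k + 1) x', φ k x a⟫)
    (hφn : ∀ k, k + 2 ≤ H → ∀ (x : X k) (a : A), ‖φ k x a‖ ≤ 1)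
    (hμn : ∀ k, k + 2 ≤ H → ∀ g : X (k + 1) → ℝ, (∀ x', g x' ∈ Set.Icc (0 : ℝ) 1) →
      ‖∑ x' : X (k + 1), g x' • μ (k + 1) x'‖ ≤ Real.sqrt d)
    (η : ℝ) (hη : η ∈ Set.Ioo (0 : ℝ) 1)
    (B : ℕ → ℝ) (hB : ∀ k, k < H → 0 < B k)
    (r : ∀ k, X k → A → ℝ)
    (hr : ∀ k, k < H → ∀ (x : X k) (a : A), |r k x a| ≤ B k) :
    (⨆ π : {π | IsExtPolicy (X := X) (A := A) π}, valueExt H ρ T r π.1) -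
        2 * H * (d : ℝ) ^ ((3 : ℝ) / 2) * η * ∑ k ∈ Finset.range H, B k ≤
      ⨆ π : trunc d ρ T μ η H, valueExt H ρ T r π.1 := by
  classical
  obtain ⟨hη0, hη1⟩ := hη
  have hd0 : (0:ℝ) < d := by exact_mod_cast Nat.lt_of_lt_of_le Nat.zero_lt_one hd
  have hBsum0 : (0:ℝ) ≤ ∑ k ∈ Finset.range H, B k :=
    Finset.sum_nonneg fun k hk => (hB k (Finset.mem_range.mp hk)).le
  -- one truncation step
  have hstep : ∀ n, n < H → ∀ π ∈ trunc d ρ T μ η n,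
      ∃ π' ∈ trunc d ρ T μ η (n + 1),
        valueExt H ρ T r π - valueExt H ρ T r π' ≤
          η * (2 * d * Real.sqrt d) * ∑ k ∈ Finset.range H, B k := by
    intro n hn π hπmem
    have hπ : IsExtPolicy π := trunc_isExtPolicy d ρ T μ η hπmem
    refine ⟨truncAt n (reachSet d ρ T μ η (trunc d ρ T μ η n) n) π,
      truncAt_mem_trunc d ρ T μ η hπmem, ?_⟩
    have h1 := value_diff_le H ρ T hρ hT B hB r hr hπ n hn
      (reachSet d ρ T μ η (trunc d ρ T μ η n) n)
    have h2 : tmass ρ T π n (reachSet d ρ T μ η (trunc d ρ T μ η n) n) ≤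
        η * (2 * d * Real.sqrt d) := by
      rcases Nat.eq_zero_or_pos n with hn0 | hn1
      · subst hn0
        have hz : tmass ρ T π 0 (reachSet d ρ T μ η (trunc d ρ T μ η 0) 0) = 0 := by
          unfold tmass
          refine Finset.sum_eq_zero fun x _ => ?_
          have hxu : x ∈ reachSet d ρ T μ η (trunc d ρ T μ η 0) 0 := Set.mem_univ x
          rw [if_pos hxu]
        rw [hz]
        have : (0:ℝ) ≤ Real.sqrt d := Real.sqrt_nonneg _
        positivity
      · exact tmass_reach_le H ρ T hρ hT d μ η hη0 hμn hn1 hn hπmem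
    calc valueExt H ρ T r π -
          valueExt H ρ T r (truncAt n (reachSet d ρ T μ η (trunc d ρ T μ η n) n) π)
        ≤ tmass ρ T π n (reachSet d ρ T μ η (trunc d ρ T μ η n) n) *
            ∑ k ∈ Finset.range H, B k := h1
      _ ≤ η * (2 * d * Real.sqrt d) * ∑ k ∈ Finset.range H, B k :=
          mul_le_mul_of_nonneg_right h2 hBsum0
  -- iterating the truncation
  have hchain : ∀ π, IsExtPolicy π → ∀ n, n ≤ H → ∃ π' ∈ trunc d ρ T μ η n,
      valueExt H ρ T r π - valueExt H ρ T r π' ≤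
        n * (η * (2 * d * Real.sqrt d) * ∑ k ∈ Finset.range H, B k) := by
    intro π hπ n
    induction n with
    | zero =>
      intro _
      refine ⟨π, ?_, by simp⟩
      simp only [trunc]
      exact hπ
    | succ n ih =>
      intro hn
      obtain ⟨π', hmem, hle⟩ := ih (by omega)
      obtain ⟨π'', hmem'', hle''⟩ := hstep n (by omega) π' hmem
      refine ⟨π'', hmem'', ?_⟩
      push_cast
      linarith
  -- bounding the suprema
  have hbddT : BddAbove (Set.range fun π : trunc d ρ T μ η H =>
      valueExt H ρ T r π.1) := by
    refine ⟨∑ k ∈ Finset.range H, B k, ?_⟩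
    rintro _ ⟨π', rfl⟩
    exact valueExt_le H ρ T hρ hT B hB r hr (trunc_isExtPolicy d ρ T μ η π'.2)
  have hrpow : (d : ℝ) ^ ((3 : ℝ) / 2) = d * Real.sqrt d := by
    rw [show (3 : ℝ) / 2 = 1 + 1 / 2 by norm_num, Real.rpow_add hd0, Real.rpow_one,
      ← Real.sqrt_eq_rpow]
  have hconst : 2 * (H : ℝ) * (d : ℝ) ^ ((3 : ℝ) / 2) * η * ∑ k ∈ Finset.range H, B k
      = H * (η * (2 * d * Real.sqrt d) * ∑ k ∈ Finset.range H, B k) := by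
    rw [hrpow]
    ring
  have hne : Nonempty {π | IsExtPolicy (X := X) (A := A) π} := by
    refine ⟨⟨fun k x a => if a = Sum.inr () then 1 else 0, ?_, ?_⟩⟩
    · intro k x
      constructor
      · intro a
        dsimp only
        split <;> norm_num
      · dsimp only
        simp
    · intro k
      dsimp only
      simp
  rw [sub_le_iff_le_add]
  refine ciSup_le fun πs => ?_
  obtain ⟨π', hmem', hle'⟩ := hchain πs.1 πs.2 H le_rfl
  have h3 : valueExt H ρ T r π' ≤ ⨆ π : trunc d ρ T μ η H, valueExt H ρ T r π.1 :=
    le_ciSup hbddT (⟨π', hmem'⟩ : trunc d ρ T μ η H)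
  rw [hconst]
  linarith
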